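/- Let ℓ be an odd positive integer, let p₁, p₂ be nonnegative reals with p₁ + p₂ = 1, and let δ be a real with 0 < δ ≤ p₁ − p₂. Then ∑_{i=(ℓ+1)/2}^{ℓ} C(ℓ,i)·(p₁^i·p₂^{ℓ−i} − p₁^{ℓ−i}·p₂^i) ≥ √(2ℓ/π)·g(δ,ℓ). (For a sample of ℓ i.i.d. two-valued observations with success probability p₁, this left-hand side equals the probability that value 1 is the strict majority of the sample minus the probability that value 2 is the strict majority.) -/

import Mathlib

open scoped BigOperators

/-- The function `g(x, y)` from the paper: `g(x,y) = x (1-x²)^{(y-1)/2}` if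
`x < 1/√y`, and `g(x,y) = (1/√y)(1-1/y)^{(y-1)/2}` if `x ≥ 1/√y`. -/
noncomputable def g (x y : ℝ) : ℝ :=
  if x < 1 / Real.sqrt y then x * (1 - x ^ 2) ^ ((y - 1) / 2)
  else (1 / Real.sqrt y) * (1 - 1 / y) ^ ((y - 1) / 2)

/-- **Bias amplification for binary majority.** For an odd positive `ℓ`,
`p₁ + p₂ = 1`, `p₁, p₂ ≥ 0` and `0 < δ ≤ p₁ - p₂`,
`∑_{i=(ℓ+1)/2}^{ℓ} C(ℓ,i) (p₁^i p₂^{ℓ-i} - p₁^{ℓ-i} p₂^i) ≥ √(2ℓ/π) g(δ,ℓ)`: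
the probability that value 1 is the strict sample majority minus the probability
that value 2 is the strict sample majority is at least `√(2ℓ/π) g(δ,ℓ)`. -/

lemma wallis_q (m : ℕ) :
    (2 * m + 1 : ℝ) * ((Nat.centralBinom m : ℝ) / 4 ^ m) ^ 2 * Real.Wallis.W m = 1 := by
  have hfac : ((2 * m).factorial : ℝ) = (Nat.centralBinom m : ℝ) * m.factorial * m.factorial := by
    rw [Nat.centralBinom]
    have := Nat.choose_mul_factorial_mul_factorial (Nat.le_mul_of_pos_left m (by norm_num : 0 < 2))
    have h2 : 2 * m - m = m := by omega
    rw [h2] at this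
    exact_mod_cast congrArg (Nat.cast : ℕ → ℝ) this.symm
  rw [Real.Wallis.W_eq_factorial_ratio, hfac]
  have h1 : (m.factorial : ℝ) ≠ 0 := by positivity
  have h4 : ((2:ℝ)) ^ (4 * m) = (4 : ℝ) ^ m * 4 ^ m := by
    rw [show 4 * m = 2 * m + 2 * m by ring, pow_add]
    norm_num [pow_mul]
  rw [h4]
  have hc : (Nat.centralBinom m : ℝ) ≠ 0 := by
    exact_mod_cast Nat.centralBinom_ne_zero m
  field_simp

lemma wallis_bound (m : ℕ) :
    2 / Real.pi ≤ (2 * m + 1 : ℝ) * ((Nat.centralBinom m : ℝ) / 4 ^ m) ^ 2 := by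
  have hW := Real.Wallis.W_le m
  have hWpos := Real.Wallis.W_pos m
  have hq := wallis_q m
  have hpi := Real.pi_pos
  have hq' : (2 * m + 1 : ℝ) * ((Nat.centralBinom m : ℝ) / 4 ^ m) ^ 2
      = 1 / Real.Wallis.W m := by
    rw [eq_div_iff hWpos.ne']; exact hq
  rw [hq', div_le_div_iff₀ hpi hWpos]
  linarith

/-- Derivative of the upper-tail binomial CDF. -/
lemma tail_hasDerivAt (m : ℕ) (p : ℝ) :
    HasDerivAt (fun q : ℝ => ∑ i ∈ Finset.Icc (m + 1) (2 * m + 1),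
        ((2 * m + 1).choose i : ℝ) * (q ^ i * (1 - q) ^ (2 * m + 1 - i)))
      (((2 * m + 1).choose (m + 1) : ℝ) * (m + 1) * (p ^ m * (1 - p) ^ m)) p := by
  set ℓ := 2 * m + 1 with hℓ
  set u : ℕ → ℝ := fun i => (ℓ.choose i * i : ℕ) * (p ^ (i - 1) * (1 - p) ^ (ℓ - i)) with hu
  have hterm : ∀ i ∈ Finset.Icc (m + 1) ℓ,
      HasDerivAt (fun q : ℝ => (ℓ.choose i : ℝ) * (q ^ i * (1 - q) ^ (ℓ - i)))
        (u i - u (i + 1)) p := by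
    intro i hi
    rw [Finset.mem_Icc] at hi
    have h1 : HasDerivAt (fun q : ℝ => q ^ i) (i * p ^ (i - 1)) p := hasDerivAt_pow i p
    have h2 : HasDerivAt (fun q : ℝ => (1 - q) ^ (ℓ - i))
        ((ℓ - i : ℕ) * (1 - p) ^ (ℓ - i - 1) * (-1)) p := by
      have := (hasDerivAt_pow (ℓ - i) (1 - p)).comp p
        (((hasDerivAt_const p (1:ℝ)).sub (hasDerivAt_id p)))
      simpa [Function.comp_def] using this
    have h3 := (h1.mul h2).const_mul ((ℓ.choose i : ℝ))
    refine h3.congr_deriv ?_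
    have hid : (ℓ.choose (i + 1) * (i + 1) : ℕ) = ℓ.choose i * (ℓ - i) :=
      Nat.choose_succ_right_eq ℓ i
    have hii : i + 1 - 1 = i := rfl
    rw [hu]
    simp only [hid, hii]
    have hcast : ((ℓ.choose i * (ℓ - i) : ℕ) : ℝ) = (ℓ.choose i : ℝ) * ((ℓ - i : ℕ) : ℝ) := by
      push_cast; ring
    have hcast2 : ((ℓ.choose i * i : ℕ) : ℝ) = (ℓ.choose i : ℝ) * (i : ℝ) := by
      push_cast; ring
    rw [hcast, hcast2]
    have e4 : ℓ - (i + 1) = ℓ - i - 1 := by omega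
    rw [e4]
    ring
  have hsum := HasDerivAt.fun_sum hterm
  refine hsum.congr_deriv ?_
  rw [← Finset.Ico_add_one_right_eq_Icc, Finset.sum_Ico_eq_sum_range]
  have hn : ℓ + 1 - (m + 1) = m + 1 := by omega
  rw [hn]
  have : ∀ j, u (m + 1 + j) - u (m + 1 + j + 1) = (fun k => u (m + 1 + k)) j
      - (fun k => u (m + 1 + k)) (j + 1) := by intro j; simp [Nat.add_assoc]
  simp only [this]
  rw [Finset.sum_range_sub' (fun k => u (m + 1 + k)) (m + 1)]
  have h0 : u (m + 1 + (m + 1)) = 0 := by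
    have : ℓ.choose (m + 1 + (m + 1)) = 0 := Nat.choose_eq_zero_of_lt (by omega)
    simp [hu, this]
  rw [h0, sub_zero, hu]
  have e1 : m + 1 + 0 = m + 1 := rfl
  have e2 : m + 1 - 1 = m := rfl
  have e3 : ℓ - (m + 1) = m := by omega
  simp only [e1, e2, e3]
  push_cast
  ring

set_option maxHeartbeats 1000000 in
theorem binary_majority_amplification (ℓ : ℕ) (hℓ : 0 < ℓ) (hodd : Odd ℓ)
    (p₁ p₂ δ : ℝ) (hp₁ : 0 ≤ p₁) (hp₂ : 0 ≤ p₂) (hsum : p₁ + p₂ = 1)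
    (hδ0 : 0 < δ) (hδ : δ ≤ p₁ - p₂) :
    ∑ i ∈ Finset.Icc ((ℓ + 1) / 2) ℓ,
        (ℓ.choose i : ℝ) * (p₁ ^ i * p₂ ^ (ℓ - i) - p₁ ^ (ℓ - i) * p₂ ^ i)
      ≥ Real.sqrt (2 * ℓ / Real.pi) * g δ ℓ := by
  obtain ⟨m, hm⟩ := hodd
  have hm' : ℓ = 2 * m + 1 := by omega
  subst hm'
  have hp2 : p₂ = 1 - p₁ := by linarith
  subst hp2
  have hp11 : p₁ ≤ 1 := by linarith
  have hphalf : 1 / 2 < p₁ := by linarith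
  -- notation
  set ℓ := 2 * m + 1 with hℓdef
  have hidx : (ℓ + 1) / 2 = m + 1 := by omega
  rw [hidx]
  set K : ℝ := ((ℓ.choose (m + 1) : ℝ) * (m + 1)) with hK
  have hK0 : 0 ≤ K := by positivity
  set A : ℝ → ℝ := fun q => ∑ i ∈ Finset.Icc (m + 1) ℓ,
      (ℓ.choose i : ℝ) * (q ^ i * (1 - q) ^ (ℓ - i)) with hA
  set F : ℝ → ℝ := fun q => A q - A (1 - q) with hF
  -- the LHS equals F p₁
  have hLHS : ∑ i ∈ Finset.Icc (m + 1) ℓ,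
      (ℓ.choose i : ℝ) * (p₁ ^ i * (1 - p₁) ^ (ℓ - i) - p₁ ^ (ℓ - i) * (1 - p₁) ^ i)
      = F p₁ := by
    simp only [hF, hA, ← Finset.sum_sub_distrib]
    apply Finset.sum_congr rfl
    intro i hi
    have : (1 : ℝ) - (1 - p₁) = p₁ := by ring
    rw [this]
    ring
  rw [hLHS]
  -- derivative of F
  have hFderiv : ∀ q : ℝ, HasDerivAt F (2 * K * (q ^ m * (1 - q) ^ m)) q := by
    intro q
    have h1 := tail_hasDerivAt m q
    have hin : HasDerivAt (fun x : ℝ => 1 - x) (-1) q := by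
      simpa [Pi.sub_def] using (hasDerivAt_const q (1:ℝ)).sub (hasDerivAt_id q)
    have h2 := (tail_hasDerivAt m (1 - q)).comp q hin
    have h3 := h1.sub h2
    refine h3.congr_deriv ?_
    have : (1 : ℝ) - (1 - q) = q := by ring
    rw [this]
    simp only [hK]
    ring
  -- FTC
  have hcont : Continuous (fun t : ℝ => 2 * K * (t ^ m * (1 - t) ^ m)) := by continuity
  have hFTC : ∀ a b : ℝ, ∫ t in a..b, 2 * K * (t ^ m * (1 - t) ^ m) = F b - F a := by
    intro a b
    exact intervalIntegral.integral_eq_sub_of_hasDerivAt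
      (fun x _ => hFderiv x) (hcont.intervalIntegrable a b)
  have hFhalf : F (1/2) = 0 := by
    simp only [hF]
    norm_num
  have hFp1 : F p₁ = ∫ t in (1/2 : ℝ)..p₁, 2 * K * (t ^ m * (1 - t) ^ m) := by
    rw [hFTC, hFhalf, sub_zero]
  rw [hFp1]
  -- the cutoff c
  set c : ℝ := min δ (1 / Real.sqrt ℓ) with hc
  have hsq : (0:ℝ) < Real.sqrt ℓ := Real.sqrt_pos.mpr (by positivity)
  have hc0 : 0 < c := lt_min hδ0 (by positivity)
  have hcδ : c ≤ δ := min_le_left _ _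
  have hδ1 : δ ≤ 1 := by linarith
  have hc1 : c ≤ 1 := le_trans hcδ hδ1
  have hmid : (1 + c) / 2 ≤ p₁ := by
    have : c ≤ p₁ - (1 - p₁) := le_trans hcδ hδ
    linarith
  -- split the integral
  have hsplit : ∫ t in (1/2 : ℝ)..p₁, 2 * K * (t ^ m * (1 - t) ^ m)
      = (∫ t in (1/2 : ℝ)..((1+c)/2), 2 * K * (t ^ m * (1 - t) ^ m))
        + ∫ t in ((1+c)/2 : ℝ)..p₁, 2 * K * (t ^ m * (1 - t) ^ m) := by
    rw [intervalIntegral.integral_add_adjacent_intervals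
      (hcont.intervalIntegrable _ _) (hcont.intervalIntegrable _ _)]
  rw [hsplit]
  -- second piece nonneg
  have hI2 : 0 ≤ ∫ t in ((1+c)/2 : ℝ)..p₁, 2 * K * (t ^ m * (1 - t) ^ m) := by
    apply intervalIntegral.integral_nonneg hmid
    intro t ht
    obtain ⟨ht1, ht2⟩ := ht
    have h1 : 0 ≤ t := by linarith
    have h2 : 0 ≤ 1 - t := by linarith
    positivity
  -- first piece lower bound
  have hcc : (0:ℝ) ≤ (1 - c ^ 2) / 4 := by nlinarith
  have hI1 : (c / 2) * (2 * K * (((1 - c ^ 2) / 4) ^ m))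
      ≤ ∫ t in (1/2 : ℝ)..((1+c)/2), 2 * K * (t ^ m * (1 - t) ^ m) := by
    have hle : (1:ℝ)/2 ≤ (1 + c)/2 := by linarith
    have hmono : ∀ t ∈ Set.Icc ((1:ℝ)/2) ((1+c)/2),
        2 * K * (((1 - c ^ 2) / 4) ^ m) ≤ 2 * K * (t ^ m * (1 - t) ^ m) := by
      intro t ht
      obtain ⟨ht1, ht2⟩ := ht
      have hb : (1 - c ^ 2) / 4 ≤ t * (1 - t) := by nlinarith
      have hb2 : ((1 - c ^ 2) / 4) ^ m ≤ (t * (1 - t)) ^ m := pow_le_pow_left₀ hcc hb m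
      rw [mul_pow] at hb2
      have := mul_le_mul_of_nonneg_left hb2 (by positivity : (0:ℝ) ≤ 2 * K)
      linarith
    calc (c / 2) * (2 * K * (((1 - c ^ 2) / 4) ^ m))
        = ∫ _ in (1/2 : ℝ)..((1+c)/2), 2 * K * (((1 - c ^ 2) / 4) ^ m) := by
          rw [intervalIntegral.integral_const, smul_eq_mul]
          congr 1
          ring
      _ ≤ ∫ t in (1/2 : ℝ)..((1+c)/2), 2 * K * (t ^ m * (1 - t) ^ m) := by
          apply intervalIntegral.integral_mono_on hle
            (intervalIntegrable_const) (hcont.intervalIntegrable _ _) hmono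
  -- identify g
  have hgeq : g δ ℓ = c * (1 - c ^ 2) ^ m := by
    have hexp : (((ℓ:ℕ) : ℝ) - 1) / 2 = (m : ℝ) := by
      push_cast [hℓdef]
      ring
    rw [g, hexp]
    by_cases hcase : δ < 1 / Real.sqrt ℓ
    · rw [if_pos hcase, hc, min_eq_left hcase.le, Real.rpow_natCast]
    · rw [if_neg hcase]
      push_neg at hcase
      rw [hc, min_eq_right hcase]
      have h1 : 1 - (1 / Real.sqrt ℓ) ^ 2 = 1 - 1 / (ℓ:ℝ) := by
        rw [div_pow, one_pow, Real.sq_sqrt (by positivity : (0:ℝ) ≤ (ℓ:ℝ))]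
      rw [← h1, Real.rpow_natCast]
  -- the Wallis step
  have hKval : K = (2 * m + 1 : ℝ) * (Nat.centralBinom m : ℝ) := by
    have := Nat.add_one_mul_choose_eq (2 * m) m
    rw [hK, Nat.centralBinom]
    have hcast : ((2 * m + 1) * (2 * m).choose m : ℕ)
        = ((2 * m + 1).choose (m + 1) * (m + 1) : ℕ) := by
      simpa [Nat.succ_eq_add_one] using this
    have := congrArg (Nat.cast : ℕ → ℝ) hcast
    push_cast at this
    rw [hℓdef]
    linarith
  have hsqrt : Real.sqrt (2 * (ℓ:ℝ) / Real.pi)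
      ≤ (2 * m + 1 : ℝ) * ((Nat.centralBinom m : ℝ) / 4 ^ m) := by
    set B : ℝ := (Nat.centralBinom m : ℝ) / 4 ^ m with hB
    have hB0 : 0 < B := by
      rw [hB]
      have : (0:ℝ) < (Nat.centralBinom m : ℝ) := by
        exact_mod_cast Nat.centralBinom_pos m
      positivity
    have hT0 : (0:ℝ) ≤ (2 * m + 1 : ℝ) * B := by positivity
    have hsq2 : 2 * (ℓ:ℝ) / Real.pi ≤ ((2 * m + 1 : ℝ) * B) ^ 2 := by
      have hw := wallis_bound m
      have := mul_le_mul_of_nonneg_left hw (by positivity : (0:ℝ) ≤ (2 * m + 1 : ℝ))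
      calc 2 * (ℓ:ℝ) / Real.pi = (2 * m + 1 : ℝ) * (2 / Real.pi) := by
            rw [hℓdef]; push_cast; ring
        _ ≤ (2 * m + 1 : ℝ) * ((2 * m + 1 : ℝ) * B ^ 2) := this
        _ = ((2 * m + 1 : ℝ) * B) ^ 2 := by ring
    calc Real.sqrt (2 * (ℓ:ℝ) / Real.pi) ≤ Real.sqrt (((2 * m + 1 : ℝ) * B) ^ 2) :=
          Real.sqrt_le_sqrt hsq2
      _ = (2 * m + 1 : ℝ) * B := Real.sqrt_sq hT0
  -- put it together
  have hgpos : 0 ≤ c * (1 - c ^ 2) ^ m := by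
    have : (0:ℝ) ≤ 1 - c ^ 2 := by nlinarith
    positivity
  have hfin : Real.sqrt (2 * (ℓ:ℝ) / Real.pi) * (c * (1 - c ^ 2) ^ m)
      ≤ (c / 2) * (2 * K * (((1 - c ^ 2) / 4) ^ m)) := by
    have h1 : (c / 2) * (2 * K * (((1 - c ^ 2) / 4) ^ m))
        = ((2 * m + 1 : ℝ) * ((Nat.centralBinom m : ℝ) / 4 ^ m)) * (c * (1 - c ^ 2) ^ m) := by
      rw [hKval, div_pow]
      field_simp
    rw [h1]
    exact mul_le_mul_of_nonneg_right hsqrt hgpos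
  rw [hgeq]
  have hchain : Real.sqrt (2 * (ℓ:ℝ) / Real.pi) * (c * (1 - c ^ 2) ^ m)
      ≤ ∫ t in (1/2 : ℝ)..((1+c)/2), 2 * K * (t ^ m * (1 - t) ^ m) := le_trans hfin hI1
  linarith [hI2, hchain]
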